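/- Let φ ∈ C^{1,γ}(ℝ), 0 < γ < 1, with φ'(s) > 0 for all s, and let u : Q → ℝ be bounded with u ∈ C^α_σ(Q), i.e., |u(Y₁) - u(Y₂)| ≤ K|Y₁ - Y₂|_σ^α for all Y₁, Y₂. Fix Y₀ ∈ Q and define f(Y) = u(Y) - φ(u(Y))/φ'(u(Y₀)). Then there is a constant c > 0 (depending on K, the C^{1,γ} seminorm of φ', and a positive lower bound for φ' on the range of u) such that for all Y₁, Y₂ ∈ Q: |f(Y₁) - f(Y₂)| ≤ c max{|Y₁ - Y₀|_σ^{αγ}, |Y₂ - Y₀|_σ^{αγ}} |Y₁ - Y₂|_σ^α. -/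
import Mathlib


open MeasureTheory

/-- The σ-parabolic gauge `|Y|_σ = (|x|² + |t|^{2/σ})^{1/2}` for `Y = (x,t) ∈ ℝ^N × ℝ`. -/
noncomputable def pGauge (σ : ℝ) {N : ℕ} (Y : EuclideanSpace ℝ (Fin N) × ℝ) : ℝ :=
  Real.sqrt (‖Y.1‖ ^ 2 + |Y.2| ^ (2 / σ))

lemma pGauge_nonneg (σ : ℝ) {N : ℕ} (Y : EuclideanSpace ℝ (Fin N) × ℝ) :
    0 ≤ pGauge σ Y := Real.sqrt_nonneg _

/-- Mean value theorem in a form valid for `a ≠ b` in either order. -/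
lemma mvt_slope (φ : ℝ → ℝ) (hφ : Differentiable ℝ φ) (a b : ℝ) (hab : a ≠ b) :
    ∃ θ, min a b ≤ θ ∧ θ ≤ max a b ∧ φ a - φ b = deriv φ θ * (a - b) := by
  rcases lt_or_gt_of_ne hab with h | h
  · obtain ⟨θ, hθ, hd⟩ := exists_deriv_eq_slope φ h hφ.continuous.continuousOn
      hφ.differentiableOn
    refine ⟨θ, ?_, ?_, ?_⟩
    · exact le_trans (min_le_left _ _) hθ.1.le
    · exact le_trans hθ.2.le (le_max_right _ _)
    · have hne : b - a ≠ 0 := sub_ne_zero.mpr (ne_of_gt h)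
      field_simp at hd
      nlinarith [hd]
  · obtain ⟨θ, hθ, hd⟩ := exists_deriv_eq_slope φ h hφ.continuous.continuousOn
      hφ.differentiableOn
    refine ⟨θ, ?_, ?_, ?_⟩
    · exact le_trans (min_le_right _ _) hθ.1.le
    · exact le_trans hθ.2.le (le_max_left _ _)
    · have hne : a - b ≠ 0 := sub_ne_zero.mpr (ne_of_gt h)
      field_simp at hd
      nlinarith [hd]

/-- Improved local Hölder estimate for `f(Y) = u(Y) - φ(u(Y))/φ'(u(Y₀))` when
`φ ∈ C^{1,γ}` with `φ' > 0` and `u` is bounded and `C^α_σ` on `Q = ℝ^N × (0,∞)`. -/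
theorem improved_holder_nonlinear (N : ℕ) (hN : 1 ≤ N) (σ α γ K M m H : ℝ)
    (hσ : 0 < σ) (hσ2 : σ < 2) (hγ : 0 < γ) (hγ1 : γ < 1) (hα : 0 < α)
    (hK : 0 ≤ K) (hH : 0 ≤ H)
    (φ : ℝ → ℝ) (hφ : Differentiable ℝ φ) (hφ' : ∀ s : ℝ, 0 < deriv φ s)
    (hHol : ∀ a b : ℝ, |deriv φ a - deriv φ b| ≤ H * |a - b| ^ γ)
    (u : EuclideanSpace ℝ (Fin N) × ℝ → ℝ)
    (hbd : ∀ Y : EuclideanSpace ℝ (Fin N) × ℝ, 0 < Y.2 → |u Y| ≤ M)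
    (hm : 0 < m) (hlow : ∀ s : ℝ, |s| ≤ M → m ≤ deriv φ s)
    (huα : ∀ Y₁ Y₂ : EuclideanSpace ℝ (Fin N) × ℝ, 0 < Y₁.2 → 0 < Y₂.2 →
      |u Y₁ - u Y₂| ≤ K * pGauge σ (Y₁ - Y₂) ^ α)
    (Y₀ : EuclideanSpace ℝ (Fin N) × ℝ) (hY₀ : 0 < Y₀.2) :
    ∃ c > 0, ∀ Y₁ Y₂ : EuclideanSpace ℝ (Fin N) × ℝ, 0 < Y₁.2 → 0 < Y₂.2 →
      |(u Y₁ - φ (u Y₁) / deriv φ (u Y₀)) - (u Y₂ - φ (u Y₂) / deriv φ (u Y₀))|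
        ≤ c * max (pGauge σ (Y₁ - Y₀) ^ (α * γ)) (pGauge σ (Y₂ - Y₀) ^ (α * γ)) *
            pGauge σ (Y₁ - Y₂) ^ α := by
  set D := deriv φ (u Y₀) with hD
  have hDm : m ≤ D := hlow _ (hbd Y₀ hY₀)
  have hDpos : 0 < D := lt_of_lt_of_le hm hDm
  refine ⟨H * K * K ^ γ / m + 1, by positivity, ?_⟩
  intro Y₁ Y₂ h1 h2
  set p₁ := pGauge σ (Y₁ - Y₀) with hp₁
  set p₂ := pGauge σ (Y₂ - Y₀) with hp₂
  set q := pGauge σ (Y₁ - Y₂) with hq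
  have hp₁0 : 0 ≤ p₁ := pGauge_nonneg _ _
  have hp₂0 : 0 ≤ p₂ := pGauge_nonneg _ _
  have hq0 : 0 ≤ q := pGauge_nonneg _ _
  set Mx := max (p₁ ^ (α * γ)) (p₂ ^ (α * γ)) with hMx
  have hMx0 : 0 ≤ Mx := le_trans (Real.rpow_nonneg hp₁0 _) (le_max_left _ _)
  have hq0' : 0 ≤ q ^ α := Real.rpow_nonneg hq0 _
  by_cases heq : u Y₁ = u Y₂
  · rw [heq, sub_self]
    simp only [abs_zero]
    positivity
  · obtain ⟨θ, hθ1, hθ2, hslope⟩ := mvt_slope φ hφ (u Y₁) (u Y₂) heq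
    -- bound |θ - u Y₀|
    have hθbd : |θ - u Y₀| ≤ max |u Y₁ - u Y₀| |u Y₂ - u Y₀| := by
      have ha1 := neg_abs_le (u Y₁ - u Y₀)
      have ha2 := neg_abs_le (u Y₂ - u Y₀)
      have hb1 := le_abs_self (u Y₁ - u Y₀)
      have hb2 := le_abs_self (u Y₂ - u Y₀)
      have hm1 := le_max_left |u Y₁ - u Y₀| |u Y₂ - u Y₀|
      have hm2 := le_max_right |u Y₁ - u Y₀| |u Y₂ - u Y₀|
      rw [abs_le]
      constructor
      · rcases le_total (u Y₁) (u Y₂) with h | h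
        · rw [min_eq_left h] at hθ1; linarith
        · rw [min_eq_right h] at hθ1; linarith
      · rcases le_total (u Y₁) (u Y₂) with h | h
        · rw [max_eq_right h] at hθ2; linarith
        · rw [max_eq_left h] at hθ2; linarith
    have h10 : |u Y₁ - u Y₀| ≤ K * p₁ ^ α := huα Y₁ Y₀ h1 hY₀
    have h20 : |u Y₂ - u Y₀| ≤ K * p₂ ^ α := huα Y₂ Y₀ h2 hY₀
    -- key γ-power bound
    have hpow : |θ - u Y₀| ^ γ ≤ K ^ γ * Mx := by
      rcases max_cases |u Y₁ - u Y₀| |u Y₂ - u Y₀| with ⟨h, _⟩ | ⟨h, _⟩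
      · have hb : |θ - u Y₀| ≤ K * p₁ ^ α := (hθbd.trans_eq h).trans h10
        calc |θ - u Y₀| ^ γ ≤ (K * p₁ ^ α) ^ γ :=
              Real.rpow_le_rpow (abs_nonneg _) hb hγ.le
          _ = K ^ γ * (p₁ ^ α) ^ γ :=
              Real.mul_rpow hK (Real.rpow_nonneg hp₁0 _)
          _ = K ^ γ * p₁ ^ (α * γ) := by rw [← Real.rpow_mul hp₁0]
          _ ≤ K ^ γ * Mx :=
              mul_le_mul_of_nonneg_left (le_max_left _ _) (Real.rpow_nonneg hK _)
      · have hb : |θ - u Y₀| ≤ K * p₂ ^ α := (hθbd.trans_eq h).trans h20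
        calc |θ - u Y₀| ^ γ ≤ (K * p₂ ^ α) ^ γ :=
              Real.rpow_le_rpow (abs_nonneg _) hb hγ.le
          _ = K ^ γ * (p₂ ^ α) ^ γ :=
              Real.mul_rpow hK (Real.rpow_nonneg hp₂0 _)
          _ = K ^ γ * p₂ ^ (α * γ) := by rw [← Real.rpow_mul hp₂0]
          _ ≤ K ^ γ * Mx :=
              mul_le_mul_of_nonneg_left (le_max_right _ _) (Real.rpow_nonneg hK _)
    -- rewrite f₁ - f₂
    have hrw : (u Y₁ - φ (u Y₁) / D) - (u Y₂ - φ (u Y₂) / D)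
        = (u Y₁ - u Y₂) * ((D - deriv φ θ) / D) := by
      have hDne : D ≠ 0 := ne_of_gt hDpos
      field_simp
      linear_combination -hslope
    rw [hrw, abs_mul]
    have hu12 : |u Y₁ - u Y₂| ≤ K * q ^ α := huα Y₁ Y₂ h1 h2
    have hfac : |(D - deriv φ θ) / D| ≤ H * (K ^ γ * Mx) / m := by
      rw [abs_div, abs_of_pos hDpos]
      rw [div_le_div_iff₀ hDpos hm]
      have hHol' : |D - deriv φ θ| ≤ H * |u Y₀ - θ| ^ γ := hHol _ _
      have habs : |u Y₀ - θ| = |θ - u Y₀| := abs_sub_comm _ _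
      have h1 : |D - deriv φ θ| ≤ H * (K ^ γ * Mx) := by
        calc |D - deriv φ θ| ≤ H * |θ - u Y₀| ^ γ := by rwa [habs] at hHol'
          _ ≤ H * (K ^ γ * Mx) := mul_le_mul_of_nonneg_left hpow hH
      calc |D - deriv φ θ| * m ≤ (H * (K ^ γ * Mx)) * D :=
            mul_le_mul h1 hDm hm.le
              (mul_nonneg hH (mul_nonneg (Real.rpow_nonneg hK γ) hMx0))
        _ = H * (K ^ γ * Mx) * D := rfl
    calc |u Y₁ - u Y₂| * |(D - deriv φ θ) / D|
        ≤ (K * q ^ α) * (H * (K ^ γ * Mx) / m) := by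
          apply mul_le_mul hu12 hfac (abs_nonneg _)
          positivity
      _ = (H * K * K ^ γ / m) * Mx * q ^ α := by ring
      _ ≤ (H * K * K ^ γ / m + 1) * Mx * q ^ α := by
          apply mul_le_mul_of_nonneg_right _ hq0'
          apply mul_le_mul_of_nonneg_right _ hMx0
          linarith
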